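/- Let A be a small preadditive category and t = (T,F) a hereditary torsion pair in Mod A. Then t is of finite type if and only if the Grothendieck topology G^T associated to T (given by G^T_a = {R ≤ H_a : H_a/R ∈ T}) has a basis of finitely generated right ideals, i.e. there is a family B = {B_a : a ∈ Ob(A)} with B_a ⊆ G^T_a consisting of finitely generated submodules of H_a, such that every R ∈ G^T_a contains some S ∈ B_a. -/

import Mathlib

open CategoryTheory CategoryTheory.Limits Opposite
noncomputable section
universe u
variable (A : Type u) [SmallCategory A] [Preadditive A]

abbrev PMod := Aᵒᵖ ⥤ AddCommGrpCat.{u}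

def Hrep (b : A) : PMod A where
  obj a := AddCommGrpCat.of (unop a ⟶ b)
  map f := AddCommGrpCat.ofHom (AddMonoidHom.mk' (fun g => f.unop ≫ g)
    (fun g h => Preadditive.comp_add _ _ _ _ _ _))
  map_id a := by ext g; simp
  map_comp f g := by
    ext h
    show (f ≫ g).unop ≫ h = g.unop ≫ f.unop ≫ h
    simp

def toH {a b : A} (γ : a ⟶ b) : ((Hrep A b).obj (op a)) := γ

def Hmap {b b' : A} (r : b ⟶ b') : Hrep A b ⟶ Hrep A b' where
  app a := AddCommGrpCat.ofHom (AddMonoidHom.mk' (fun g => g ≫ r)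
    (fun g h => Preadditive.add_comp _ _ _ _ _ _))
  naturality a a' f := by
    ext g
    exact Category.assoc (obj := A) f.unop g r

def inSub {M : PMod A} (R : Subobject M) {a : A} (x : M.obj (op a)) : Prop :=
  ∃ y, R.arrow.app (op a) y = x


def IsTorsionPair (T F : Set (PMod A)) : Prop :=
  T = {X | X.Additive ∧ ∀ Y ∈ F, ∀ f : X ⟶ Y, f = 0} ∧
  F = {X | X.Additive ∧ ∀ Y ∈ T, ∀ f : Y ⟶ X, f = 0} ∧
  ∀ X : PMod A, X.Additive →
    ∃ (Z : PMod A) (p : X ⟶ Z), Z ∈ F ∧ Epi p ∧ kernel p ∈ T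

/-- The torsion-free class is closed under direct limits. -/
def ClosedUnderDirectLimits (F : Set (PMod A)) : Prop :=
  ∀ (J : Type u) [SmallCategory J] [IsFiltered J] (D : J ⥤ PMod A),
    (∀ j, D.obj j ∈ F) → colimit D ∈ F

/-- `M` is a finitely generated module: an epimorphic image of a finite coproduct of
representables. -/
def IsFinitelyGenerated (M : PMod A) : Prop :=
  ∃ (n : ℕ) (g : Fin n → A) (p : (∐ fun i => Hrep A (g i)) ⟶ M), Epi p

variable {A}

lemma hrep_additive (b : A) : (Hrep A b).Additive := by
  constructor
  intro X Y f g
  ext γ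
  show (f + g).unop ≫ γ = f.unop ≫ γ + g.unop ≫ γ
  exact Preadditive.add_comp (unop Y) (unop X) b f.unop g.unop γ

lemma pm_comp_apply {X Y Z : PMod A} (f : X ⟶ Y) (g : Y ⟶ Z) (a : Aᵒᵖ) (x : X.obj a) :
    (f ≫ g).app a x = g.app a (f.app a x) := rfl

lemma pm_map_add {X : PMod A} (hX : X.Additive) {a b : Aᵒᵖ} (f g : a ⟶ b) :
    X.map (f + g) = X.map f + X.map g := by
  haveI := hX; exact X.map_add

/-- the morphism `Hrep A a ⟶ X` determined by an element `x : X(a)` -/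
def eltHom {X : PMod A} (hX : X.Additive) {a : A} (x : X.obj (op a)) : Hrep A a ⟶ X where
  app a' := AddCommGrpCat.ofHom (AddMonoidHom.mk' (fun γ => X.map (Quiver.Hom.op (γ : (unop a') ⟶ a)) x)
    (by
      intro γ δ
      show X.map ((γ + δ : unop a' ⟶ a).op) x = X.map γ.op x + X.map δ.op x
      rw [show (γ + δ : unop a' ⟶ a).op = γ.op + δ.op from rfl, pm_map_add hX]
      rfl))
  naturality a' a'' f := by
    ext γ
    show X.map ((f.unop ≫ γ) : (unop a'') ⟶ a).op x = X.map f (X.map γ.op x)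
    have : ((f.unop ≫ γ) : (unop a'') ⟶ a).op = γ.op ≫ f := rfl
    rw [this, X.map_comp]
    rfl

lemma eltHom_app {X : PMod A} (hX : X.Additive) {a : A} (x : X.obj (op a)) {a' : A}
    (γ : a' ⟶ a) : (eltHom hX x).app (op a') (toH A γ) = X.map γ.op x := rfl

lemma eltHom_self {X : PMod A} (hX : X.Additive) {a : A} (x : X.obj (op a)) :
    (eltHom hX x).app (op a) (toH A (𝟙 a)) = x := by
  show X.map ((𝟙 a).op) x = x
  have : (𝟙 a).op = 𝟙 (op a) := rfl
  rw [this, X.map_id]; rfl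

/-- a morphism out of a representable is determined by its value at the identity -/
lemma hom_from_hrep_app {X : PMod A} {a : A} (φ : Hrep A a ⟶ X) {a' : A} (γ : a' ⟶ a) :
    φ.app (op a') (toH A γ) = X.map γ.op (φ.app (op a) (toH A (𝟙 a))) := by
  have h1 : (Hrep A a).map γ.op (toH A (𝟙 a)) = toH A γ := by
    show γ ≫ 𝟙 a = γ; simp
  have := congrArg (fun (ψ : (Hrep A a).obj (op a) ⟶ X.obj (op a')) =>
    ψ (toH A (𝟙 a))) (φ.naturality γ.op)
  dsimp at this
  rw [← this, h1]

lemma hom_from_hrep_ext {X : PMod A} {a : A} (φ ψ : Hrep A a ⟶ X)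
    (h : φ.app (op a) (toH A (𝟙 a)) = ψ.app (op a) (toH A (𝟙 a))) : φ = ψ := by
  ext a' γ
  have e1 := hom_from_hrep_app φ (γ : (unop a') ⟶ a)
  have e2 := hom_from_hrep_app ψ (γ : (unop a') ⟶ a)
  show φ.app (op (unop a')) (toH A γ) = ψ.app (op (unop a')) (toH A γ)
  rw [e1, e2, h]

lemma hom_from_hrep_eq_zero {X : PMod A} {a : A} (φ : Hrep A a ⟶ X)
    (h : φ.app (op a) (toH A (𝟙 a)) = 0) : φ = 0 := by
  apply hom_from_hrep_ext
  rw [h]; rfl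

lemma additive_of_epi {X Y : PMod A} (p : X ⟶ Y) [Epi p] (hX : X.Additive) : Y.Additive := by
  constructor
  intro a b f g
  have hs : Function.Surjective (p.app a) := (AddCommGrpCat.epi_iff_surjective _).1 inferInstance
  ext y
  obtain ⟨x, rfl⟩ := hs y
  have nat : ∀ (φ : a ⟶ b) (z : X.obj a), Y.map φ (p.app a z) = p.app b (X.map φ z) := by
    intro φ z
    exact (congrArg (fun (ψ : X.obj a ⟶ Y.obj b) => ψ z) (p.naturality φ)).symm
  show Y.map (f+g) (p.app a x) = (Y.map f + Y.map g) (p.app a x)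
  rw [nat (f+g) x, pm_map_add hX]
  show p.app b (X.map f x + X.map g x) = Y.map f (p.app a x) + Y.map g (p.app a x)
  rw [map_add, nat f x, nat g x]

lemma additive_of_mono {X Y : PMod A} (i : X ⟶ Y) [Mono i] (hY : Y.Additive) : X.Additive := by
  constructor
  intro a b f g
  have hs : Function.Injective (i.app b) := (AddCommGrpCat.mono_iff_injective _).1 inferInstance
  ext x
  apply hs
  have nat : ∀ (φ : a ⟶ b) (z : X.obj a), i.app b (X.map φ z) = Y.map φ (i.app a z) := by
    intro φ z
    exact congrArg (fun (ψ : X.obj a ⟶ Y.obj b) => ψ z) (i.naturality φ)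
  show i.app b (X.map (f+g) x) = i.app b ((X.map f + X.map g) x)
  rw [nat (f+g) x, pm_map_add hY]
  show Y.map f (i.app a x) + Y.map g (i.app a x) = i.app b (X.map f x + X.map g x)
  rw [map_add, nat f x, nat g x]

section torsion
variable {T F : Set (PMod A)} (h : IsTorsionPair A T F)
include h

lemma memT_additive {X : PMod A} (hX : X ∈ T) : X.Additive := by
  rw [h.1] at hX; exact hX.1

lemma memF_additive {X : PMod A} (hX : X ∈ F) : X.Additive := by
  rw [h.2.1] at hX; exact hX.1

lemma homTF_zero {X Y : PMod A} (hX : X ∈ T) (hY : Y ∈ F) (f : X ⟶ Y) : f = 0 := by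
  rw [h.1] at hX; exact hX.2 Y hY f

lemma memT_of_epi {X Y : PMod A} (p : X ⟶ Y) [Epi p] (hX : X ∈ T) : Y ∈ T := by
  rw [h.1]
  refine ⟨additive_of_epi p (memT_additive h hX), fun Z hZ f => ?_⟩
  have : p ≫ f = 0 := homTF_zero h hX hZ _
  rw [← cancel_epi p, this, comp_zero]

lemma memT_of_mono {X Y : PMod A} (i : X ⟶ Y) [Mono i] (hY : Y ∈ T)
    (hher : ∀ (S X : PMod A) (f : S ⟶ X), Mono f → X ∈ T → S ∈ T) : X ∈ T :=
  hher X Y i inferInstance hY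

lemma memT_iso {X Y : PMod A} (e : X ≅ Y) (hX : X ∈ T)
    (hher : ∀ (S X : PMod A) (f : S ⟶ X), Mono f → X ∈ T → S ∈ T) : Y ∈ T :=
  hher Y X e.inv inferInstance hX

/-- a map vanishing on a "dense" subobject (torsion cokernel) into a torsion-free module
is zero -/
lemma vanish_of_dense {K X W : PMod A} (i : K ⟶ X) (ψ : X ⟶ W)
    (h0 : i ≫ ψ = 0) (hc : cokernel i ∈ T) (hW : W ∈ F) : ψ = 0 := by
  have : cokernel.desc i ψ h0 = 0 := homTF_zero h hc hW _
  rw [← cokernel.π_desc i ψ h0, this, comp_zero]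

end torsion

section colim
variable {J : Type u} [SmallCategory J] [IsFiltered J] (D : J ⥤ PMod A)

lemma pmod_exists_rep (X : Aᵒᵖ) (x : (colimit D).obj X) :
    ∃ (j : J) (y : (D.obj j).obj X), (colimit.ι D j).app X y = x := by
  let E := D ⋙ (evaluation Aᵒᵖ AddCommGrpCat.{u}).obj X
  obtain ⟨j, y, hy⟩ := Concrete.colimit_exists_rep E
    ((colimitObjIsoColimitCompEvaluation D X).hom x)
  refine ⟨j, y, ?_⟩
  have h2 : (colimit.ι D j).app X y =
      (colimitObjIsoColimitCompEvaluation D X).inv (colimit.ι E j y) := by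
    exact (congrArg (fun (ψ : E.obj j ⟶ (colimit D).obj X) => ψ y)
      (colimitObjIsoColimitCompEvaluation_ι_inv D j X)).symm
  rw [h2, hy]
  exact congrArg (fun (ψ : (colimit D).obj X ⟶ (colimit D).obj X) => ψ x)
    ((colimitObjIsoColimitCompEvaluation D X).hom_inv_id)

lemma pmod_rep_zero (X : Aᵒᵖ) (j : J) (y : (D.obj j).obj X)
    (hy : (colimit.ι D j).app X y = 0) :
    ∃ (k : J) (t : j ⟶ k), (D.map t).app X y = 0 := by
  let E := D ⋙ (evaluation Aᵒᵖ AddCommGrpCat.{u}).obj X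
  have h1 : colimit.ι E j y = colimit.ι E j (0 : (E.obj j)) := by
    have e1 : colimit.ι E j y =
        (colimitObjIsoColimitCompEvaluation D X).hom ((colimit.ι D j).app X y) := by
      exact (congrArg (fun (ψ : E.obj j ⟶ colimit E) => ψ y)
        (colimitObjIsoColimitCompEvaluation_ι_app_hom D j X)).symm
    rw [e1, hy, map_zero, map_zero]
  obtain ⟨k, f, g, hfg⟩ := Concrete.colimit_exists_of_rep_eq E _ _ h1
  refine ⟨k, f, ?_⟩
  have : (E.map g) (0 : E.obj j) = 0 := map_zero _
  rw [show (D.map f).app X y = E.map f y from rfl, hfg, this]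

lemma pmod_common_kill {j : J} {n : ℕ} (X : Fin n → Aᵒᵖ)
    (y : ∀ i, (D.obj j).obj (X i))
    (hy : ∀ i, (colimit.ι D j).app (X i) (y i) = 0) :
    ∃ (k : J) (t : j ⟶ k), ∀ i, (D.map t).app (X i) (y i) = 0 := by
  induction n with
  | zero => exact ⟨j, 𝟙 j, fun i => i.elim0⟩
  | succ n ih =>
    obtain ⟨k, t, ht⟩ := ih (fun i => X i.succ) (fun i => y i.succ) (fun i => hy i.succ)
    have h0 : (colimit.ι D k).app (X 0) ((D.map t).app (X 0) (y 0)) = 0 := by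
      have := congrArg (fun (ψ : (D.obj j).obj (X 0) ⟶ (colimit D).obj (X 0)) => ψ (y 0))
        (congrArg (fun (α : D.obj j ⟶ colimit D) => α.app (X 0)) (colimit.w D t))
      dsimp at this
      rw [this, hy 0]
    obtain ⟨k', t', ht'⟩ := pmod_rep_zero D (X 0) k _ h0
    refine ⟨k', t ≫ t', ?_⟩
    intro i
    have hcomp : ∀ (Z : Aᵒᵖ) (z : (D.obj j).obj Z),
        (D.map (t ≫ t')).app Z z = (D.map t').app Z ((D.map t).app Z z) := by
      intro Z z
      rw [D.map_comp]
      rfl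
    refine Fin.cases ?_ ?_ i
    · rw [hcomp, ht']
    · intro i'
      rw [hcomp, ht i', map_zero]

lemma pmod_colimit_additive (hD : ∀ j, (D.obj j).Additive) : (colimit D).Additive := by
  constructor
  intro X Y f g
  ext x
  obtain ⟨j, y, rfl⟩ := pmod_exists_rep D X x
  have nat : ∀ (φ : X ⟶ Y) (z : (D.obj j).obj X),
      (colimit D).map φ ((colimit.ι D j).app X z) = (colimit.ι D j).app Y ((D.obj j).map φ z) := by
    intro φ z
    exact (congrArg (fun (ψ : (D.obj j).obj X ⟶ (colimit D).obj Y) => ψ z)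
      ((colimit.ι D j).naturality φ)).symm
  show (colimit D).map (f+g) ((colimit.ι D j).app X y)
      = (colimit D).map f ((colimit.ι D j).app X y) + (colimit D).map g ((colimit.ι D j).app X y)
  rw [nat (f+g) y, nat f y, nat g y, pm_map_add (hD j)]
  show (colimit.ι D j).app Y ((D.obj j).map f y + (D.obj j).map g y) = _
  rw [map_add]

end colim

section main
variable {T F : Set (PMod A)} (h : IsTorsionPair A T F)
  (hher : ∀ (S X : PMod A) (f : S ⟶ X), Mono f → X ∈ T → S ∈ T)
include h hher

lemma dir_back (B : ∀ a : A, Set (Subobject (Hrep A a)))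
    (hB1 : ∀ (a : A), ∀ R ∈ B a, cokernel (Subobject.arrow R) ∈ T ∧
          IsFinitelyGenerated A (R : PMod A))
    (hB2 : ∀ (a : A) (R : Subobject (Hrep A a)), cokernel R.arrow ∈ T →
          ∃ S ∈ B a, S ≤ R) :
    ClosedUnderDirectLimits A F := by
  intro J _ _ D hD
  have hDadd : ∀ j, (D.obj j).Additive := fun j => memF_additive h (hD j)
  have hCadd : (colimit D).Additive := pmod_colimit_additive D hDadd
  rw [h.2.1]
  refine ⟨hCadd, fun Y hY f => ?_⟩
  ext a' y
  let a : A := unop a'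
  let y' : Y.obj (op a) := y
  let yh : Hrep A a ⟶ Y := eltHom (memT_additive h hY) y'
  let φ : Hrep A a ⟶ colimit D := yh ≫ f
  have hx : φ.app (op a) (toH A (𝟙 a)) = f.app a' y := by
    show f.app (op a) (yh.app (op a) (toH A (𝟙 a))) = f.app a' y
    rw [eltHom_self]
  -- the kernel of φ has torsion cokernel
  haveI : Epi (factorThruImage f) := by infer_instance
  have himf : image f ∈ T := memT_of_epi h (factorThruImage f) hY
  have himsubf : ((imageSubobject f : Subobject (colimit D)) : PMod A) ∈ T :=
    memT_iso h (imageSubobjectIso f).symm himf hher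
  have hle : imageSubobject φ ≤ imageSubobject f := imageSubobject_comp_le yh f
  have himsubφ : ((imageSubobject φ : Subobject (colimit D)) : PMod A) ∈ T :=
    memT_of_mono h (Subobject.ofLE _ _ hle) himsubf hher
  have e0 : (kernelSubobject φ).arrow = (kernelSubobjectIso φ).hom ≫ kernel.ι φ :=
    (kernelSubobject_arrow φ).symm
  have e1 : cokernel (kernelSubobject φ).arrow ≅ cokernel (kernel.ι φ) := by
    rw [e0]; exact cokernelEpiComp _ _
  have e2 : cokernel (kernel.ι φ) ≅ image φ := Abelian.coimageIsoImage' φ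
  have e3 : image φ ≅ ((imageSubobject φ : Subobject (colimit D)) : PMod A) :=
    (imageSubobjectIso φ).symm
  have hcok : cokernel (kernelSubobject φ).arrow ∈ T :=
    memT_iso h (e1 ≪≫ e2 ≪≫ e3).symm himsubφ hher
  obtain ⟨S, hSB, hSR⟩ := hB2 a (kernelSubobject φ) hcok
  obtain ⟨hScok, n, g, p, hp⟩ := And.imp_right id (hB1 a S hSB)
  let ρ : ∀ i : Fin n, Hrep A (g i) ⟶ Hrep A a :=
    fun i => Sigma.ι (fun i => Hrep A (g i)) i ≫ p ≫ S.arrow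
  let γ : ∀ i : Fin n, (g i) ⟶ a := fun i => (ρ i).app (op (g i)) (toH A (𝟙 (g i)))
  have hSφ : S.arrow ≫ φ = 0 := by
    have h1 : S.arrow = Subobject.ofLE _ _ hSR ≫ (kernelSubobject φ).arrow :=
      (Subobject.ofLE_arrow hSR).symm
    rw [h1, Category.assoc, kernelSubobject_arrow_comp, comp_zero]
  have hρφ : ∀ i, ρ i ≫ φ = 0 := by
    intro i
    have : ρ i ≫ φ = Sigma.ι (fun i => Hrep A (g i)) i ≫ p ≫ (S.arrow ≫ φ) := by
      simp [ρ, Category.assoc]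
    rw [this, hSφ, comp_zero, comp_zero]
  have hkill : ∀ i, φ.app (op (g i)) (toH A (γ i)) = 0 := by
    intro i
    have : φ.app (op (g i)) (toH A (γ i)) = (ρ i ≫ φ).app (op (g i)) (toH A (𝟙 (g i))) := rfl
    rw [this, hρφ i]
    rfl
  obtain ⟨j, y₀, hrep⟩ := pmod_exists_rep D (op a) (φ.app (op a) (toH A (𝟙 a)))
  have hcond : ∀ i, (colimit.ι D j).app (op (g i)) ((D.obj j).map (γ i).op y₀) = 0 := by
    intro i
    have n1 : (colimit.ι D j).app (op (g i)) ((D.obj j).map (γ i).op y₀)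
        = (colimit D).map (γ i).op ((colimit.ι D j).app (op a) y₀) :=
      congrArg (fun (ψ : (D.obj j).obj (op a) ⟶ (colimit D).obj (op (g i))) => ψ y₀)
        ((colimit.ι D j).naturality (γ i).op)
    rw [n1, hrep, ← hom_from_hrep_app φ (γ i), hkill i]
  obtain ⟨k, t, ht⟩ := pmod_common_kill D (fun i => op (g i))
    (fun i => (D.obj j).map (γ i).op y₀) hcond
  let z : (D.obj k).obj (op a) := (D.map t).app (op a) y₀
  let zh : Hrep A a ⟶ D.obj k := eltHom (hDadd k) z
  have hz_at : ∀ i, (D.obj k).map (γ i).op z = 0 := by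
    intro i
    have n2 : (D.obj k).map (γ i).op ((D.map t).app (op a) y₀)
        = (D.map t).app (op (g i)) ((D.obj j).map (γ i).op y₀) :=
      (congrArg (fun (ψ : (D.obj j).obj (op a) ⟶ (D.obj k).obj (op (g i))) => ψ y₀)
        ((D.map t).naturality (γ i).op)).symm
    rw [show (D.obj k).map (γ i).op z
        = (D.obj k).map (γ i).op ((D.map t).app (op a) y₀) from rfl, n2, ht i]
  have hSz : S.arrow ≫ zh = 0 := by
    rw [← cancel_epi p, comp_zero]
    apply Sigma.hom_ext
    intro i
    rw [comp_zero]
    apply hom_from_hrep_eq_zero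
    have : (Sigma.ι (fun i => Hrep A (g i)) i ≫ p ≫ S.arrow ≫ zh).app (op (g i))
        (toH A (𝟙 (g i))) = zh.app (op (g i)) (toH A (γ i)) := by
      have e : Sigma.ι (fun i => Hrep A (g i)) i ≫ p ≫ S.arrow ≫ zh = ρ i ≫ zh := by
        simp [ρ, Category.assoc]
      rw [e]
      rfl
    have e2 : (Sigma.ι (fun i => Hrep A (g i)) i ≫ (p ≫ S.arrow ≫ zh)).app (op (g i))
        (toH A (𝟙 (g i))) = zh.app (op (g i)) (toH A (γ i)) := by
      rw [← this]
    rw [e2, eltHom_app, hz_at i]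
  have hzh : zh = 0 := vanish_of_dense h S.arrow zh hSz hScok (hD k)
  have hz : z = 0 := by
    have h2 : z = zh.app (op a) (toH A (𝟙 a)) := (eltHom_self (hDadd k) z).symm
    rw [h2, hzh]
    rfl
  have hfin : φ.app (op a) (toH A (𝟙 a)) = 0 := by
    rw [← hrep]
    have w1 : (colimit.ι D j).app (op a) y₀ = (colimit.ι D k).app (op a) z := by
      have := congrArg (fun (α : D.obj j ⟶ colimit D) => α.app (op a)) (colimit.w D t)
      exact (congrArg (fun (ψ : (D.obj j).obj (op a) ⟶ (colimit D).obj (op a)) => ψ y₀)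
        this).symm
    rw [w1, hz, map_zero]
  rw [hx] at hfin
  rw [hfin]
  rfl
end main

section tfquot
variable {T F : Set (PMod A)} (h : IsTorsionPair A T F)

def tq {X : PMod A} (hX : X.Additive) : PMod A := (h.2.2 X hX).choose

def tp {X : PMod A} (hX : X.Additive) : X ⟶ tq h hX := (h.2.2 X hX).choose_spec.choose

lemma tq_memF {X : PMod A} (hX : X.Additive) : tq h hX ∈ F :=
  (h.2.2 X hX).choose_spec.choose_spec.1

lemma tp_epi {X : PMod A} (hX : X.Additive) : Epi (tp h hX) :=
  (h.2.2 X hX).choose_spec.choose_spec.2.1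

lemma tpker_memT {X : PMod A} (hX : X.Additive) : kernel (tp h hX) ∈ T :=
  (h.2.2 X hX).choose_spec.choose_spec.2.2

def tdesc {X W : PMod A} (hX : X.Additive) (u : X ⟶ W) (hW : W ∈ F) : tq h hX ⟶ W :=
  haveI := tp_epi h hX
  Abelian.epiDesc (tp h hX) u (homTF_zero h (tpker_memT h hX) hW _)

lemma tp_tdesc {X W : PMod A} (hX : X.Additive) (u : X ⟶ W) (hW : W ∈ F) :
    tp h hX ≫ tdesc h hX u hW = u := by
  haveI := tp_epi h hX
  exact Abelian.comp_epiDesc _ _ _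

end tfquot

section fwd
variable {T F : Set (PMod A)} (h : IsTorsionPair A T F) {a : A} (R : Subobject (Hrep A a))

abbrev RGamma : Type u := Σ a' : A, ((Subobject.underlying.obj R).obj (op a') : Type u)

def gl (L : Finset (RGamma R)) (i : Fin L.card) : RGamma R := (L.equivFin.symm i).1

lemma gl_mem (L : Finset (RGamma R)) (i : Fin L.card) : gl R L i ∈ L := (L.equivFin.symm i).2

def phiL (L : Finset (RGamma R)) :
    (∐ fun i : Fin L.card => Hrep A ((gl R L i).1)) ⟶ Hrep A a :=
  Sigma.desc (fun i => eltHom (hrep_additive a) (R.arrow.app (op (gl R L i).1) (gl R L i).2))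

abbrev XL (L : Finset (RGamma R)) : PMod A := cokernel (phiL R L)

lemma XL_additive (L : Finset (RGamma R)) : (XL R L).Additive :=
  additive_of_epi (cokernel.π (phiL R L)) (hrep_additive a)

lemma eltHom_mem_kill (L : Finset (RGamma R)) (γ : RGamma R) (hγ : γ ∈ L) :
    eltHom (hrep_additive a) (R.arrow.app (op γ.1) γ.2) ≫ cokernel.π (phiL R L) = 0 := by
  have e : gl R L (L.equivFin ⟨γ, hγ⟩) = γ := congrArg Subtype.val (L.equivFin.symm_apply_apply ⟨γ, hγ⟩)
  rw [← e]
  set i : Fin L.card := L.equivFin ⟨γ, hγ⟩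
  have h1 : Sigma.ι (fun i : Fin L.card => Hrep A ((gl R L i).1)) i ≫ phiL R L
      = eltHom (hrep_additive a) (R.arrow.app (op (gl R L i).1) (gl R L i).2) :=
    Sigma.ι_desc _ _
  rw [← h1, Category.assoc, cokernel.condition, comp_zero]

def qL (L L' : Finset (RGamma R)) (hLL : L ≤ L') : XL R L ⟶ XL R L' :=
  cokernel.desc _ (cokernel.π (phiL R L')) (by
    apply Sigma.hom_ext
    intro i
    rw [← Category.assoc, comp_zero]
    have h1 : Sigma.ι (fun i : Fin L.card => Hrep A ((gl R L i).1)) i ≫ phiL R L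
        = eltHom (hrep_additive a) (R.arrow.app (op (gl R L i).1) (gl R L i).2) :=
      Sigma.ι_desc _ _
    rw [h1]
    exact eltHom_mem_kill R L' (gl R L i) (Finset.le_iff_subset.mp hLL (gl_mem R L i)))

lemma qL_pi (L L' : Finset (RGamma R)) (hLL : L ≤ L') :
    cokernel.π (phiL R L) ≫ qL R L L' hLL = cokernel.π (phiL R L') := cokernel.π_desc _ _ _

def Dfn : Finset (RGamma R) ⥤ PMod A where
  obj L := tq h (XL_additive R L)
  map {L L'} t := tdesc h (XL_additive R L)
    (qL R L L' (leOfHom t) ≫ tp h (XL_additive R L')) (tq_memF h _)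
  map_id L := by
    haveI := tp_epi h (XL_additive R L)
    refine (cancel_epi (tp h (XL_additive R L))).1 ?_
    rw [tp_tdesc]
    have h1 : qL R L L (leOfHom (𝟙 L)) = 𝟙 (XL R L) := by
      haveI : Epi (cokernel.π (phiL R L)) := inferInstance
      refine (cancel_epi (cokernel.π (phiL R L))).1 ?_
      rw [qL_pi]
      exact (Category.comp_id _).symm
    rw [h1, Category.id_comp]
    exact (Category.comp_id _).symm
  map_comp {L L' L''} t t' := by
    haveI := tp_epi h (XL_additive R L)
    refine (cancel_epi (tp h (XL_additive R L))).1 ?_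
    rw [tp_tdesc, ← Category.assoc, tp_tdesc, Category.assoc, tp_tdesc]
    have h1 : qL R L L'' (leOfHom (t ≫ t'))
        = qL R L L' (leOfHom t) ≫ qL R L' L'' (leOfHom t') := by
      haveI : Epi (cokernel.π (phiL R L)) := inferInstance
      refine (cancel_epi (cokernel.π (phiL R L))).1 ?_
      rw [qL_pi, ← Category.assoc, qL_pi, qL_pi]
    rw [h1, Category.assoc]

def cL (L : Finset (RGamma R)) : Hrep A a ⟶ (Dfn h R).obj L :=
  cokernel.π (phiL R L) ≫ tp h (XL_additive R L)

lemma cL_nat {L L' : Finset (RGamma R)} (t : L ⟶ L') :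
    cL h R L ≫ (Dfn h R).map t = cL h R L' := by
  dsimp only [cL, Dfn]
  rw [Category.assoc, tp_tdesc, ← Category.assoc, qL_pi]
end fwd

section fwdmain
variable {T F : Set (PMod A)} (h : IsTorsionPair A T F)
  (hher : ∀ (S X : PMod A) (f : S ⟶ X), Mono f → X ∈ T → S ∈ T)
include h hher

lemma dir_fwd (hF : ClosedUnderDirectLimits A F) :
    ∃ B : ∀ a : A, Set (Subobject (Hrep A a)),
      (∀ (a : A), ∀ R ∈ B a, cokernel (Subobject.arrow R) ∈ T ∧
        IsFinitelyGenerated A (R : PMod A)) ∧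
      (∀ (a : A) (R : Subobject (Hrep A a)), cokernel R.arrow ∈ T →
        ∃ S ∈ B a, S ≤ R) := by
  classical
  refine ⟨fun a => {S | cokernel S.arrow ∈ T ∧ IsFinitelyGenerated A (S : PMod A)},
    fun a R hR => hR, ?_⟩
  intro a R hR
  haveI : IsDirected (Finset (RGamma R)) (· ≤ ·) :=
    ⟨fun L L' => ⟨L ∪ L', Finset.le_iff_subset.mpr Finset.subset_union_left,
      Finset.le_iff_subset.mpr Finset.subset_union_right⟩⟩
  have hcolim : colimit (Dfn h R) ∈ F := hF (Finset (RGamma R)) (Dfn h R)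
    (fun L => tq_memF h (XL_additive R L))
  let w : Hrep A a ⟶ colimit (Dfn h R) := cL h R ∅ ≫ colimit.ι (Dfn h R) ∅
  have hwL : ∀ L : Finset (RGamma R), w = cL h R L ≫ colimit.ι (Dfn h R) L := by
    intro L
    have t : (∅ : Finset (RGamma R)) ⟶ L :=
      homOfLE (Finset.le_iff_subset.mpr (Finset.empty_subset L))
    rw [show w = cL h R ∅ ≫ colimit.ι (Dfn h R) ∅ from rfl, ← colimit.w (Dfn h R) t,
      ← Category.assoc, cL_nat]
  have hker : R.arrow ≫ w = 0 := by
    ext a' r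
    let γg : RGamma R := ⟨unop a', r⟩
    let L : Finset (RGamma R) := {γg}
    have hk := eltHom_mem_kill R L γg (Finset.mem_singleton_self _)
    have h1 : (eltHom (hrep_additive a) (R.arrow.app (op γg.1) γg.2) ≫
        cokernel.π (phiL R L)).app (op γg.1) (toH A (𝟙 γg.1))
        = (cokernel.π (phiL R L)).app (op γg.1) (R.arrow.app (op γg.1) γg.2) := by
      rw [pm_comp_apply, eltHom_self]
    rw [hk] at h1
    have hπ0 : (cokernel.π (phiL R L)).app (op γg.1) (R.arrow.app (op γg.1) γg.2) = 0 := by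
      rw [← h1]; rfl
    have h2 : (R.arrow ≫ w).app a' r
        = (colimit.ι (Dfn h R) L).app (op γg.1) ((tp h (XL_additive R L)).app (op γg.1)
            ((cokernel.π (phiL R L)).app (op γg.1) (R.arrow.app (op γg.1) γg.2))) := by
      rw [hwL L]; rfl
    rw [h2, hπ0, map_zero]
    erw [map_zero]
    rfl
  have hw0 : w = 0 := vanish_of_dense h R.arrow w hker hR hcolim
  let u0 : ((Dfn h R).obj ∅).obj (op a) := (cL h R ∅).app (op a) (toH A (𝟙 a))
  have hι0 : (colimit.ι (Dfn h R) ∅).app (op a) u0 = 0 := by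
    have e : (colimit.ι (Dfn h R) ∅).app (op a) u0 = w.app (op a) (toH A (𝟙 a)) := rfl
    rw [e, hw0]
    rfl
  obtain ⟨L', t, ht⟩ := pmod_rep_zero (Dfn h R) (op a) ∅ u0 hι0
  have hcL' : cL h R L' = 0 := by
    apply hom_from_hrep_eq_zero
    have e : (cL h R L').app (op a) (toH A (𝟙 a)) = ((Dfn h R).map t).app (op a) u0 := by
      rw [← cL_nat h R t]
      rfl
    rw [e, ht]
  haveI hepi1 := tp_epi h (XL_additive R L')
  haveI : Epi (cL h R L') := epi_comp (cokernel.π (phiL R L')) (tp h (XL_additive R L'))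
  have hid0 : 𝟙 (tq h (XL_additive R L')) = 0 := by
    have e : cL h R L' ≫ 𝟙 ((Dfn h R).obj L') = cL h R L' ≫ 0 := by rw [hcL']; simp
    exact (cancel_epi (cL h R L')).1 e
  have htp0 : tp h (XL_additive R L') = 0 := by
    have e : tp h (XL_additive R L') = tp h (XL_additive R L') ≫ 𝟙 _ :=
      (Category.comp_id _).symm
    rw [e, hid0, comp_zero]
  have hXT : XL R L' ∈ T := by
    have hlift : kernel.lift (tp h (XL_additive R L')) (𝟙 _)
        (by rw [Category.id_comp, htp0]) ≫ kernel.ι (tp h (XL_additive R L')) = 𝟙 _ :=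
      kernel.lift_ι _ _ _
    haveI : IsSplitEpi (kernel.ι (tp h (XL_additive R L'))) := IsSplitEpi.mk' ⟨_, hlift⟩
    haveI : IsIso (kernel.ι (tp h (XL_additive R L'))) := isIso_of_mono_of_epi _
    exact memT_iso h (asIso (kernel.ι (tp h (XL_additive R L')))) (tpker_memT h _) hher
  refine ⟨imageSubobject (phiL R L'), ⟨?_, ?_⟩, ?_⟩
  · have e0 : (imageSubobject (phiL R L')).arrow
        = (imageSubobjectIso (phiL R L')).hom ≫ image.ι (phiL R L') :=
      (imageSubobject_arrow _).symm
    have e1 : cokernel (imageSubobject (phiL R L')).arrow ≅ cokernel (image.ι (phiL R L')) :=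
      cokernelIsoOfEq e0 ≪≫ cokernelEpiComp _ _
    have e2 : cokernel (phiL R L') ≅ cokernel (image.ι (phiL R L')) :=
      cokernelIsoOfEq (image.fac (phiL R L')).symm ≪≫ cokernelEpiComp _ _
    exact memT_iso h (e2 ≪≫ e1.symm) hXT hher
  · refine ⟨L'.card, fun i => (gl R L' i).1,
      factorThruImage (phiL R L') ≫ (imageSubobjectIso (phiL R L')).inv, ?_⟩
    haveI : Epi (factorThruImage (phiL R L')) := inferInstance
    exact epi_comp _ _
  · have hfac : phiL R L'
        = Sigma.desc (fun i => eltHom (additive_of_mono R.arrow (hrep_additive a))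
            ((gl R L' i).2)) ≫ R.arrow := by
      apply Sigma.hom_ext
      intro i
      have hL : Sigma.ι (fun i : Fin L'.card => Hrep A ((gl R L' i).1)) i ≫ phiL R L'
          = eltHom (hrep_additive a) (R.arrow.app (op (gl R L' i).1) (gl R L' i).2) :=
        Sigma.ι_desc _ _
      have hRdesc : Sigma.ι (fun i : Fin L'.card => Hrep A ((gl R L' i).1)) i ≫
          Sigma.desc (fun i => eltHom (additive_of_mono R.arrow (hrep_additive a))
            ((gl R L' i).2))
          = eltHom (additive_of_mono R.arrow (hrep_additive a)) ((gl R L' i).2) :=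
        Sigma.ι_desc _ _
      rw [hL, ← Category.assoc, hRdesc]
      apply hom_from_hrep_ext
      rw [eltHom_self]
      have e3 : (eltHom (additive_of_mono R.arrow (hrep_additive a)) ((gl R L' i).2) ≫
          R.arrow).app (op (gl R L' i).1) (toH A (𝟙 (gl R L' i).1))
          = R.arrow.app (op (gl R L' i).1) ((gl R L' i).2) := by
        rw [pm_comp_apply, eltHom_self]
      rw [e3]
    calc imageSubobject (phiL R L')
          ≤ imageSubobject R.arrow := by rw [hfac]; exact imageSubobject_comp_le _ _
      _ = R := by rw [imageSubobject_mono, Subobject.mk_arrow]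
end fwdmain


theorem statement8 (T F : Set (PMod A)) (h : IsTorsionPair A T F)
    (hher : ∀ (S X : PMod A) (f : S ⟶ X), Mono f → X ∈ T → S ∈ T) :
    ClosedUnderDirectLimits A F ↔
      ∃ B : ∀ a : A, Set (Subobject (Hrep A a)),
        (∀ (a : A), ∀ R ∈ B a, cokernel (Subobject.arrow R) ∈ T ∧
          IsFinitelyGenerated A (R : PMod A)) ∧
        (∀ (a : A) (R : Subobject (Hrep A a)), cokernel R.arrow ∈ T →
          ∃ S ∈ B a, S ≤ R) := by
  constructor
  · intro hF
    exact dir_fwd h hher hF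
  · rintro ⟨B, hB1, hB2⟩
    exact dir_back h hher B hB1 hB2
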